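/- arXiv:2301.08812 — 2 statements merged into one kernel-verified Lean document; each statement's English description precedes it below -/
import Mathlib

section
/- Let X and Y be real Hilbert spaces and let K : X × Y → ℝ be twice continuously Fréchet differentiable, with gradient maps ∇_E K : X × Y → X and ∇_B K : X × Y → Y defined by DK(E,B)(h,k) = ⟪∇_E K(E,B), h⟫_X + ⟪∇_B K(E,B), k⟫_Y. Define H : X × Y → ℝ by H(E,B) = K(E,B) − ⟪E, ∇_E K(E,B)⟫_X + (1/(8π))(‖E‖²_X + ‖B‖²_Y), and set D(E,B) = E − 4π ∇_E K(E,B) and Hf(E,B) = B + 4π ∇_B K(E,B). Suppose the map Φ(E,B) = (D(E,B), B) is a bijection of X × Y whose inverse is continuously differentiable. Then H̄ := H ∘ Φ⁻¹ is differentiable and for every (E,B) ∈ X × Y and every (δD, δB) ∈ X × Y, DH̄(Φ(E,B))(δD, δB) = ⟪E/(4π), δD⟫_X + ⟪Hf(E,B)/(4π), δB⟫_Y; equivalently, the gradient of H̄ at (D,B) = Φ(E,B) is (E/(4π), Hf(E,B)/(4π)). -/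
open RealInnerProductSpace

/-- **Derivatives of the macroscopic Maxwell Hamiltonian** (Appendix B Proposition, abstract
Hilbert-space form). With `H(E,B) = K(E,B) − ⟪E, ∇_E K⟫ + (1/8π)(‖E‖² + ‖B‖²)`,
`D = E − 4π ∇_E K`, `Hf = B + 4π ∇_B K`, and `Φ(E,B) = (D(E,B), B)` a bijection with
continuously differentiable inverse `Ψ`, the transformed Hamiltonian `H̄ = H ∘ Ψ` satisfies
`DH̄(Φ(E,B))(δD, δB) = ⟪E/4π, δD⟫ + ⟪Hf/4π, δB⟫`. -/
theorem gradient_of_transformed_maxwell_hamiltonian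
    {X Y : Type*} [NormedAddCommGroup X] [InnerProductSpace ℝ X] [CompleteSpace X]
    [NormedAddCommGroup Y] [InnerProductSpace ℝ Y] [CompleteSpace Y]
    (K : X × Y → ℝ) (hK : ContDiff ℝ 2 K)
    (gE : X × Y → X) (gB : X × Y → Y)
    (hgrad : ∀ p : X × Y, HasFDerivAt K
      (((innerSL ℝ (gE p)).comp (ContinuousLinearMap.fst ℝ X Y)) +
        ((innerSL ℝ (gB p)).comp (ContinuousLinearMap.snd ℝ X Y))) p)
    (H : X × Y → ℝ)
    (hH : ∀ p : X × Y, H p = K p - ⟪p.1, gE p⟫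
      + (1 / (8 * Real.pi)) * (‖p.1‖ ^ 2 + ‖p.2‖ ^ 2))
    (Φ : X × Y → X × Y)
    (hΦ : ∀ p : X × Y, Φ p = (p.1 - (4 * Real.pi) • gE p, p.2))
    (Ψ : X × Y → X × Y)
    (hleft : Function.LeftInverse Ψ Φ) (hright : Function.RightInverse Ψ Φ)
    (hΨ : ContDiff ℝ 1 Ψ) :
    ∀ (E : X) (B : Y),
      DifferentiableAt ℝ (H ∘ Ψ) (Φ (E, B)) ∧
      ∀ (δD : X) (δB : Y),
        fderiv ℝ (H ∘ Ψ) (Φ (E, B)) (δD, δB)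
          = ⟪(1 / (4 * Real.pi)) • E, δD⟫
            + ⟪(1 / (4 * Real.pi)) • (B + (4 * Real.pi) • gB (E, B)), δB⟫ := by
  -- gE is C¹
  have hfd : ContDiff ℝ 1 (fderiv ℝ K) := hK.fderiv_right (by norm_num)
  have hgEeq : gE = fun p => (InnerProductSpace.toDual ℝ X).symm
      ((fderiv ℝ K p).comp (ContinuousLinearMap.inl ℝ X Y)) := by
    funext p
    have hT : InnerProductSpace.toDual ℝ X (gE p)
        = (fderiv ℝ K p).comp (ContinuousLinearMap.inl ℝ X Y) := by
      apply ContinuousLinearMap.ext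
      intro h
      rw [(hgrad p).fderiv]
      simp [InnerProductSpace.toDual_apply_apply]
    rw [← hT, LinearIsometryEquiv.symm_apply_apply]
  have hgE : ContDiff ℝ 1 gE := by
    rw [hgEeq]
    exact (InnerProductSpace.toDual ℝ X).symm.contDiff.comp
      (hfd.clm_comp contDiff_const)
  intro E B
  set p : X × Y := (E, B) with hp
  have hA : HasFDerivAt gE (fderiv ℝ gE p) p :=
    ((hgE.differentiable one_ne_zero) p).hasFDerivAt
  set A := fderiv ℝ gE p with hAdef
  -- derivative of Φ
  set Φ' : (X × Y) →L[ℝ] X × Y :=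
    ((ContinuousLinearMap.fst ℝ X Y) - (4 * Real.pi) • A).prod
      (ContinuousLinearMap.snd ℝ X Y) with hΦ'def
  have hΦd : HasFDerivAt Φ Φ' p := by
    have h : HasFDerivAt (fun q : X × Y => (q.1 - (4 * Real.pi) • gE q, q.2)) Φ' p :=
      HasFDerivAt.prodMk (hasFDerivAt_fst.sub (hA.const_smul (4 * Real.pi))) hasFDerivAt_snd
    have : Φ = fun q : X × Y => (q.1 - (4 * Real.pi) • gE q, q.2) := funext hΦ
    rw [this]; exact h
  -- target functional
  set L : (X × Y) →L[ℝ] ℝ :=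
    ((innerSL ℝ ((1 / (4 * Real.pi)) • E)).comp (ContinuousLinearMap.fst ℝ X Y)) +
      ((innerSL ℝ ((1 / (4 * Real.pi)) • (B + (4 * Real.pi) • gB p))).comp
        (ContinuousLinearMap.snd ℝ X Y)) with hLdef
  -- H has derivative L ∘ Φ' at p
  have hHd : HasFDerivAt H (L.comp Φ') p := by
    have h2 : HasFDerivAt (fun q : X × Y => ⟪q.1, gE q⟫)
        ((fderivInnerCLM ℝ (p.1, gE p)).comp ((ContinuousLinearMap.fst ℝ X Y).prod A)) p :=
      hasFDerivAt_fst.inner ℝ hA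
    have h3 : HasFDerivAt (fun q : X × Y => ‖q.1‖ ^ 2)
        (2 • ((innerSL ℝ) (p.1)).comp (ContinuousLinearMap.fst ℝ X Y)) p :=
      hasFDerivAt_fst.norm_sq
    have h4 : HasFDerivAt (fun q : X × Y => ‖q.2‖ ^ 2)
        (2 • ((innerSL ℝ) (p.2)).comp (ContinuousLinearMap.snd ℝ X Y)) p :=
      hasFDerivAt_snd.norm_sq
    have hc := (((hgrad p).sub h2).add ((h3.add h4).const_mul (1 / (8 * Real.pi))))
    have hfun : H = fun q : X × Y => K q - ⟪q.1, gE q⟫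
        + (1 / (8 * Real.pi)) * (‖q.1‖ ^ 2 + ‖q.2‖ ^ 2) := funext hH
    rw [hfun]
    refine HasFDerivAt.congr_fderiv hc ?_
    symm
    apply ContinuousLinearMap.ext
    rintro ⟨h, k⟩
    have hπ : Real.pi ≠ 0 := Real.pi_ne_zero
    simp [hLdef, hΦ'def, fderivInnerCLM_apply, real_inner_smul_left, inner_sub_right,
      inner_add_left, real_inner_smul_right, real_inner_comm (gE p), hp]
    field_simp
    rw [real_inner_comm (gE (E, B)) h]
    ring
  -- Ψ derivative
  have hΨd : HasFDerivAt Ψ (fderiv ℝ Ψ (Φ p)) (Φ p) :=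
    ((hΨ.differentiable one_ne_zero) (Φ p)).hasFDerivAt
  set Ψ' := fderiv ℝ Ψ (Φ p) with hΨ'def
  have hΨΦ : Ψ (Φ p) = p := hleft p
  have hcomp : HasFDerivAt (H ∘ Ψ) ((L.comp Φ').comp Ψ') (Φ p) := by
    apply HasFDerivAt.comp
    · rw [hΨΦ]; exact hHd
    · exact hΨd
  have hid : Φ'.comp Ψ' = ContinuousLinearMap.id ℝ (X × Y) := by
    have h1 : HasFDerivAt (Φ ∘ Ψ) (Φ'.comp Ψ') (Φ p) := by
      apply HasFDerivAt.comp
      · rw [hΨΦ]; exact hΦd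
      · exact hΨd
    have h2 : HasFDerivAt (Φ ∘ Ψ) (ContinuousLinearMap.id ℝ (X × Y)) (Φ p) := by
      have : Φ ∘ Ψ = id := funext hright
      rw [this]; exact hasFDerivAt_id _
    exact h1.unique h2
  have hL : (L.comp Φ').comp Ψ' = L := by
    rw [ContinuousLinearMap.comp_assoc, hid, ContinuousLinearMap.comp_id]
  refine ⟨hcomp.differentiableAt, ?_⟩
  intro δD δB
  rw [hcomp.fderiv, hL]
  simp [hLdef, hp, real_inner_smul_left, inner_add_left]
end

section
/- Let c > 0 and v ∈ ℝ³ with 0 < ‖v‖ < c, and let L, L' : ℝ³ × ℝ³ → ℝ be differentiable functions satisfying L(E, B) = L'(𝔹(v)(E, B)) for all (E, B). Fix (E, B), set (E', B') = 𝔹(v)(E, B), and define D, H, D', H' ∈ ℝ³ by D = ∇_E L(E,B), H = −∇_B L(E,B), D' = ∇_{E'} L'(E',B'), H' = −∇_{B'} L'(E',B') (gradients with respect to the standard inner product on ℝ³). Then D' = γ(D + (1/c²) v×H) + (1 − γ)((v·D)/‖v‖²)v and H' = γ(H − v×D) + (1 − γ)((v·H)/‖v‖²)v, where γ = (1 − ‖v‖²/c²)^(−1/2).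 -/
open RealInnerProductSpace

/-- The cross product on `ℝ³` (Euclidean space). -/
noncomputable def cross3 (u v : EuclideanSpace ℝ (Fin 3)) : EuclideanSpace ℝ (Fin 3) :=
  (WithLp.equiv 2 (Fin 3 → ℝ)).symm
    (crossProduct ((WithLp.equiv 2 (Fin 3 → ℝ)) u) ((WithLp.equiv 2 (Fin 3 → ℝ)) v))

/-- The Lorentz-boost action `𝔹(v)` on an electromagnetic field pair `(E, B)`:
`𝔹(v)(E, B) = (γE + (1 − γ)((v·E)/‖v‖²)v + γ v×B, γB + (1 − γ)((v·B)/‖v‖²)v − (γ/c²) v×E)`,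
with `γ = (1 − ‖v‖²/c²)^(−1/2)`. -/
noncomputable def lorentzBoost (c : ℝ) (v : EuclideanSpace ℝ (Fin 3))
    (EB : EuclideanSpace ℝ (Fin 3) × EuclideanSpace ℝ (Fin 3)) :
    EuclideanSpace ℝ (Fin 3) × EuclideanSpace ℝ (Fin 3) :=
  let γ : ℝ := 1 / Real.sqrt (1 - ‖v‖ ^ 2 / c ^ 2)
  (γ • EB.1 + ((1 - γ) * (⟪v, EB.1⟫ / ‖v‖ ^ 2)) • v + γ • cross3 v EB.2,
   γ • EB.2 + ((1 - γ) * (⟪v, EB.2⟫ / ‖v‖ ^ 2)) • v - (γ / c ^ 2) • cross3 v EB.1)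

/-! ### Auxiliary lemmas -/

namespace MacroAux

abbrev E3 := EuclideanSpace ℝ (Fin 3)

lemma cross3_apply (u v : E3) (i : Fin 3) :
    cross3 u v i = ![u 1 * v 2 - u 2 * v 1, u 2 * v 0 - u 0 * v 2, u 0 * v 1 - u 1 * v 0] i := by
  simp [cross3, cross_apply]

lemma cross3_add_right (v a b : E3) : cross3 v (a + b) = cross3 v a + cross3 v b := by
  ext i; fin_cases i <;> simp [cross3_apply] <;> ring

lemma cross3_sub_right (v a b : E3) : cross3 v (a - b) = cross3 v a - cross3 v b := by
  ext i; fin_cases i <;> simp [cross3_apply] <;> ring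

lemma cross3_smul_right (v : E3) (r : ℝ) (a : E3) : cross3 v (r • a) = r • cross3 v a := by
  ext i; fin_cases i <;> simp [cross3_apply] <;> ring

lemma cross3_zero (v : E3) : cross3 v (0 : E3) = 0 := by
  ext i; fin_cases i <;> simp [cross3_apply]

lemma cross3_self (v : E3) : cross3 v v = 0 := by
  ext i; fin_cases i <;> simp [cross3_apply] <;> ring

lemma inner_cross3_right (a v y : E3) : ⟪a, cross3 v y⟫ = -⟪cross3 v a, y⟫ := by
  simp [PiLp.inner_apply, Fin.sum_univ_three, cross3_apply]; ring

lemma inner_cross3_self (v y : E3) : ⟪v, cross3 v y⟫ = 0 := by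
  simp [PiLp.inner_apply, Fin.sum_univ_three, cross3_apply]; ring

lemma cross3_cross3 (v x : E3) : cross3 v (cross3 v x) = ⟪v, x⟫ • v - ‖v‖ ^ 2 • x := by
  rw [← real_inner_self_eq_norm_sq]
  ext i
  fin_cases i <;>
    simp [cross3_apply, PiLp.inner_apply, Fin.sum_univ_three, EuclideanSpace.real_norm_sq_eq] <;> ring

lemma inner_grad {F : Type*} [NormedAddCommGroup F] [InnerProductSpace ℝ F] [CompleteSpace F]
    (f : F → ℝ) (x y : F) : ⟪gradient f x, y⟫ = fderiv ℝ f x y := by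
  rw [gradient, ← InnerProductSpace.toDual_apply_apply, LinearIsometryEquiv.apply_symm_apply]

section
variable {E G : Type*} [NormedAddCommGroup E] [NormedSpace ℝ E]
  [NormedAddCommGroup G] [NormedSpace ℝ G]

lemma fderiv_partial_fst (F : E × G → ℝ) {p : E} {q : G}
    (hF : DifferentiableAt ℝ F (p, q)) (y : E) :
    fderiv ℝ (fun e => F (e, q)) p y = fderiv ℝ F (p, q) (y, 0) := by
  have h1 : HasFDerivAt (fun e : E => (e, q)) (ContinuousLinearMap.inl ℝ E G) p :=
    HasFDerivAt.prodMk (hasFDerivAt_id p) (hasFDerivAt_const q p)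
  rw [show (fun e => F (e, q)) = F ∘ (fun e : E => (e, q)) from rfl,
    (hF.hasFDerivAt.comp p h1).fderiv]; rfl

lemma fderiv_partial_snd (F : E × G → ℝ) {p : E} {q : G}
    (hF : DifferentiableAt ℝ F (p, q)) (y : G) :
    fderiv ℝ (fun b => F (p, b)) q y = fderiv ℝ F (p, q) (0, y) := by
  have h1 : HasFDerivAt (fun b : G => (p, b)) (ContinuousLinearMap.inr ℝ E G) q :=
    HasFDerivAt.prodMk (hasFDerivAt_const p q) (hasFDerivAt_id q)
  rw [show (fun b => F (p, b)) = F ∘ (fun b : G => (p, b)) from rfl,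
    (hF.hasFDerivAt.comp q h1).fderiv]; rfl

lemma fderiv_split (F : E × G → ℝ) (p : E × G) (a : E) (b : G) :
    fderiv ℝ F p (a, b) = fderiv ℝ F p (a, 0) + fderiv ℝ F p (0, b) := by
  rw [← map_add]; norm_num
end

/-- The Lorentz boost as a continuous linear map. -/
noncomputable def boostCLM (c : ℝ) (v : E3) : (E3 × E3) →L[ℝ] (E3 × E3) :=
  LinearMap.toContinuousLinearMap
    { toFun := lorentzBoost c v
      map_add' := by
        intro x y
        simp only [lorentzBoost, Prod.fst_add, Prod.snd_add, inner_add_right,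
          cross3_add_right, Prod.mk_add_mk, Prod.ext_iff]
        constructor <;> module
      map_smul' := by
        intro r x
        simp only [lorentzBoost, Prod.smul_fst, Prod.smul_snd, real_inner_smul_right,
          cross3_smul_right, RingHom.id_apply, Prod.smul_mk, Prod.ext_iff]
        constructor <;> module }

lemma boostCLM_apply (c : ℝ) (v : E3) (x : E3 × E3) : boostCLM c v x = lorentzBoost c v x := rfl

end MacroAux

open MacroAux in
/-- **Transformation law of the macroscopic fields** (Section 4.1): if the Lagrangians `L`, `L'`
are related by `L(E,B) = L'(𝔹(v)(E,B))` and `D = ∇_E L`, `H = −∇_B L` (and primed versions at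
`(E',B') = 𝔹(v)(E,B)`), then `D' = γ(D + (1/c²) v×H) + (1−γ)((v·D)/‖v‖²)v` and
`H' = γ(H − v×D) + (1−γ)((v·H)/‖v‖²)v`. -/
theorem macroscopic_fields_transformation (c : ℝ) (hc : 0 < c)
    (v : EuclideanSpace ℝ (Fin 3)) (hv0 : 0 < ‖v‖) (hvc : ‖v‖ < c)
    (L L' : EuclideanSpace ℝ (Fin 3) × EuclideanSpace ℝ (Fin 3) → ℝ)
    (hL : Differentiable ℝ L) (hL' : Differentiable ℝ L')
    (hrel : ∀ EB, L EB = L' (lorentzBoost c v EB))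
    (E B : EuclideanSpace ℝ (Fin 3)) :
    let γ : ℝ := 1 / Real.sqrt (1 - ‖v‖ ^ 2 / c ^ 2)
    let E' := (lorentzBoost c v (E, B)).1
    let B' := (lorentzBoost c v (E, B)).2
    let D := gradient (fun e => L (e, B)) E
    let H := -gradient (fun b => L (E, b)) B
    let D' := gradient (fun e => L' (e, B')) E'
    let H' := -gradient (fun b => L' (E', b)) B'
    D' = γ • (D + (1 / c ^ 2) • cross3 v H) + ((1 - γ) * (⟪v, D⟫ / ‖v‖ ^ 2)) • v ∧
    H' = γ • (H - cross3 v D) + ((1 - γ) * (⟪v, H⟫ / ‖v‖ ^ 2)) • v := by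
  intro γ E' B' D H D' H'
  -- record definitional facts about the `let`-bound variables, then make them opaque
  have hp' : lorentzBoost c v (E, B) = (E', B') := rfl
  have hDdef : D = gradient (fun e => L (e, B)) E := rfl
  have hD'def : D' = gradient (fun e => L' (e, B')) E' := rfl
  have hgradH : gradient (fun b => L (E, b)) B = -H := by simp [H]
  have hgradH' : gradient (fun b => L' (E', b)) B' = -H' := by simp [H']
  have hγdef : γ = 1 / Real.sqrt (1 - ‖v‖ ^ 2 / c ^ 2) := rfl
  clear_value γ E' B' D H D' H'
  -- basic scalar facts
  have hvne : ‖v‖ ≠ 0 := ne_of_gt hv0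
  have hcne : c ≠ 0 := ne_of_gt hc
  have hs : (0 : ℝ) < 1 - ‖v‖ ^ 2 / c ^ 2 := by
    have h1 : ‖v‖ ^ 2 < c ^ 2 := by nlinarith
    have : ‖v‖ ^ 2 / c ^ 2 < 1 := by
      rw [div_lt_one (by positivity)]; exact h1
    linarith
  have hγ2 : γ ^ 2 * (1 - ‖v‖ ^ 2 / c ^ 2) = 1 := by
    rw [hγdef, div_pow, one_pow, Real.sq_sqrt hs.le, one_div, inv_mul_cancel₀ hs.ne']
  have hγ0 : (0 : ℝ) < γ := by rw [hγdef]; positivity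
  have hγne : γ ≠ 0 := ne_of_gt hγ0
  have hγc : γ ^ 2 * (c ^ 2 - ‖v‖ ^ 2) = c ^ 2 := by
    have h := hγ2
    field_simp at h
    linarith
  have hveq : ‖v‖ ^ 2 = c ^ 2 * (γ ^ 2 - 1) / γ ^ 2 := by
    rw [eq_div_iff (pow_ne_zero 2 hγne)]
    linear_combination -hγc
  have hby1 : ∀ y : E3, lorentzBoost c v (y, 0) =
      (γ • y + ((1 - γ) * (⟪v, y⟫ / ‖v‖ ^ 2)) • v, -((γ / c ^ 2) • cross3 v y)) := by
    intro y
    rw [hγdef]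
    simp [lorentzBoost, cross3_zero]
  have hby2 : ∀ y : E3, lorentzBoost c v (0, y) =
      (γ • cross3 v y, γ • y + ((1 - γ) * (⟪v, y⟫ / ‖v‖ ^ 2)) • v) := by
    intro y
    rw [hγdef]
    simp [lorentzBoost, cross3_zero]
  -- chain rule
  have hLeq : L = fun x => L' (boostCLM c v x) := funext fun x => hrel x
  have hchain : fderiv ℝ L (E, B) =
      (fderiv ℝ L' (E', B')).comp (boostCLM c v) := by
    have hB : HasFDerivAt (⇑(boostCLM c v)) (boostCLM c v) (E, B) :=
      (boostCLM c v).hasFDerivAt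
    have h2 := ((hL' (boostCLM c v (E, B))).hasFDerivAt.comp (E, B) hB).fderiv
    rw [hLeq]
    rw [show (fun x => L' (boostCLM c v x)) = L' ∘ ⇑(boostCLM c v) from rfl, h2,
      boostCLM_apply, hp']
  -- expansion of fderiv L' at (E', B') in terms of D' and H'
  have hL'app : ∀ a b : E3, fderiv ℝ L' (E', B') (a, b) = ⟪D', a⟫ - ⟪H', b⟫ := by
    intro a b
    rw [fderiv_split, ← fderiv_partial_fst L' (hL' (E', B')) a,
      ← fderiv_partial_snd L' (hL' (E', B')) b, ← inner_grad, ← inner_grad]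
    rw [hgradH', ← hD'def, inner_neg_left]; ring
  -- key identities: (D, H) as the transposed boost applied to (D', H')
  have hDvec : D = γ • D' + ((1 - γ) * (⟪v, D'⟫ / ‖v‖ ^ 2)) • v - (γ / c ^ 2) • cross3 v H' := by
    apply ext_inner_right ℝ
    intro y
    have h1 : ⟪D, y⟫ = fderiv ℝ L (E, B) (y, 0) := by
      rw [hDdef, inner_grad, fderiv_partial_fst L (hL (E, B)) y]
    rw [h1, hchain]
    have h2 : (boostCLM c v) ((y, 0) : E3 × E3) = lorentzBoost c v (y, 0) := rfl
    rw [ContinuousLinearMap.comp_apply, h2, hby1 y, hL'app]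
    simp only [inner_add_left, inner_add_right, real_inner_smul_left, real_inner_smul_right,
      inner_neg_right, inner_sub_left]
    rw [inner_cross3_right H' v y, real_inner_comm D' v]
    ring
  have hHvec : H = γ • H' + ((1 - γ) * (⟪v, H'⟫ / ‖v‖ ^ 2)) • v + γ • cross3 v D' := by
    apply ext_inner_right ℝ
    intro y
    have h1 : ⟪H, y⟫ = -fderiv ℝ L (E, B) (0, y) := by
      have h0 : ⟪gradient (fun b => L (E, b)) B, y⟫ = fderiv ℝ L (E, B) (0, y) := by
        rw [inner_grad, fderiv_partial_snd L (hL (E, B)) y]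
      rw [hgradH, inner_neg_left] at h0
      linarith
    rw [h1, hchain]
    have h2 : (boostCLM c v) ((0, y) : E3 × E3) = lorentzBoost c v (0, y) := rfl
    rw [ContinuousLinearMap.comp_apply, h2, hby2 y, hL'app]
    simp only [inner_add_left, inner_add_right, real_inner_smul_left, real_inner_smul_right,
      inner_neg_right, inner_sub_left]
    rw [inner_cross3_right D' v y, real_inner_comm H' v]
    ring
  -- invert the relations
  constructor
  · rw [show D = _ from hDvec, show H = _ from hHvec]
    simp only [cross3_add_right, cross3_sub_right, cross3_smul_right, cross3_self, smul_zero,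
      add_zero, cross3_cross3, inner_add_right, inner_sub_right, real_inner_smul_right,
      real_inner_self_eq_norm_sq, inner_cross3_self, mul_zero, add_zero, sub_zero, zero_add]
    have hin : ∀ a b : E3, (∑ x : Fin 3, a x * b x) = ⟪a, b⟫ := by
      intro a b; simp [PiLp.inner_apply, mul_comm]
    match_scalars <;> field_simp <;> (try simp only [hin]) <;>
      first
        | linear_combination -hγc
        | linear_combination (⟪v, D'⟫ - ⟪v, D'⟫ * ‖v‖ ^ 2) * hγc
        | linear_combination -(⟪v, D'⟫ * ‖v‖ ^ 2) * hγc
        | linear_combination (⟪v, H'⟫ - ⟪v, D'⟫ * ‖v‖ ^ 2) * hγc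
        | linear_combination (⟪v, D'⟫ * ‖v‖ ^ 2 - ⟪v, H'⟫ + ⟪v, D'⟫) * hγc
        | linear_combination (⟪v, D'⟫ * ‖v‖ ^ 2 - ⟪v, H'⟫) * hγc
        | linear_combination ⟪v, D'⟫ * ‖v‖ ^ 2 * hγc
        | linear_combination ⟪v, D'⟫ * hγc
        | linear_combination ⟪v, H'⟫ * hγc
        | linear_combination
  · rw [show D = _ from hDvec, show H = _ from hHvec]
    simp only [cross3_add_right, cross3_sub_right, cross3_smul_right, cross3_self, smul_zero,
      add_zero, cross3_cross3, inner_add_right, inner_sub_right, real_inner_smul_right,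
      real_inner_self_eq_norm_sq, inner_cross3_self, mul_zero, add_zero, sub_zero, zero_add]
    have hin : ∀ a b : E3, (∑ x : Fin 3, a x * b x) = ⟪a, b⟫ := by
      intro a b; simp [PiLp.inner_apply, mul_comm]
    match_scalars <;> field_simp <;> (try simp only [hin]) <;>
      first
        | linear_combination -hγc
        | linear_combination (⟪v, D'⟫ - ⟪v, D'⟫ * ‖v‖ ^ 2) * hγc
        | linear_combination -(⟪v, D'⟫ * ‖v‖ ^ 2) * hγc
        | linear_combination (⟪v, H'⟫ - ⟪v, D'⟫ * ‖v‖ ^ 2) * hγc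
        | linear_combination (⟪v, D'⟫ * ‖v‖ ^ 2 - ⟪v, H'⟫ + ⟪v, D'⟫) * hγc
        | linear_combination (⟪v, D'⟫ * ‖v‖ ^ 2 - ⟪v, H'⟫) * hγc
        | linear_combination ⟪v, D'⟫ * ‖v‖ ^ 2 * hγc
        | linear_combination ⟪v, D'⟫ * hγc
        | linear_combination ⟪v, H'⟫ * hγc
        | linear_combination
end
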